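/- Let A be the Neumann Laplacian on L²(0,π) and λ > 0. Then for 1/2 < α < 3/4 the functions b¹(ξ) = -cosh(√λ(π-ξ))/(√λ sinh(√λ π)) and b²(ξ) = cosh(√λ ξ)/(√λ sinh(√λ π)) belong to the domain D((λ - A)^α) of the fractional power (λ-A)^α. -/

import Mathlib

open Real Set MeasureTheory

/-- For `λ > 0` and `1/2 < α < 3/4`, the functions `b¹` and `b²` belong to
`D((λ-A)^α)` for the Neumann Laplacian `A` on `(0,π)`.  Membership is expressed through the
spectral decomposition of `λ - A`: the eigenfunctions are `cos(nξ)` with eigenvalues `λ + n²`,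
and `y ∈ D((λ-A)^α)` iff `∑ₙ (λ+n²)^{2α} |⟨y, cos(n·)⟩|² < ∞`. -/
theorem stmt_17 (l α : ℝ) (hl : 0 < l) (hα : 1 / 2 < α) (hα' : α < 3 / 4) :
    Summable (fun n : ℕ => (l + (n : ℝ) ^ 2) ^ (2 * α) *
      (∫ ξ in Set.Ioo 0 Real.pi,
        (-Real.cosh (Real.sqrt l * (Real.pi - ξ)) /
          (Real.sqrt l * Real.sinh (Real.sqrt l * Real.pi))) * Real.cos (n * ξ)) ^ 2) ∧
    Summable (fun n : ℕ => (l + (n : ℝ) ^ 2) ^ (2 * α) *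
      (∫ ξ in Set.Ioo 0 Real.pi,
        (Real.cosh (Real.sqrt l * ξ) /
          (Real.sqrt l * Real.sinh (Real.sqrt l * Real.pi))) * Real.cos (n * ξ)) ^ 2) := by
  set a := Real.sqrt l with ha_def
  have ha : 0 < a := Real.sqrt_pos.mpr hl
  have ha2 : a ^ 2 = l := Real.sq_sqrt hl.le
  have hS : 0 < Real.sinh (a * Real.pi) := Real.sinh_pos_iff.mpr (by positivity)
  have hx : ∀ n : ℕ, (0:ℝ) < l + (n:ℝ) ^ 2 := fun n => by positivity
  have hcosnpi : ∀ n : ℕ, Real.cos ((n:ℝ) * Real.pi) = (-1:ℝ) ^ n := fun n => by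
    simpa using Real.cos_nat_mul_pi_sub 0 n
  -- the two basic interval integrals
  have I2 : ∀ n : ℕ, (∫ ξ in (0:ℝ)..Real.pi, Real.cosh (a * ξ) * Real.cos (n * ξ))
      = a * Real.sinh (a * Real.pi) * (-1:ℝ) ^ n / (l + (n:ℝ) ^ 2) := by
    intro n
    have hF : ∀ ξ : ℝ, HasDerivAt (fun ξ => (a * Real.sinh (a * ξ) * Real.cos (n * ξ)
        + n * Real.cosh (a * ξ) * Real.sin (n * ξ)) / (l + (n:ℝ) ^ 2))
        (Real.cosh (a * ξ) * Real.cos (n * ξ)) ξ := by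
      intro ξ
      have hax : HasDerivAt (fun ξ : ℝ => a * ξ) a ξ := by
        simpa using (hasDerivAt_id ξ).const_mul a
      have hnx : HasDerivAt (fun ξ : ℝ => (n:ℝ) * ξ) (n:ℝ) ξ := by
        simpa using (hasDerivAt_id ξ).const_mul (n:ℝ)
      have h := (((hax.sinh.const_mul a).mul hnx.cos).add
        ((hax.cosh.const_mul (n:ℝ)).mul hnx.sin)).div_const (l + (n:ℝ) ^ 2)
      refine h.congr_deriv ?_
      rw [← ha2]
      field_simp
      ring
    rw [intervalIntegral.integral_eq_sub_of_hasDerivAt (fun ξ _ => hF ξ)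
      (Continuous.intervalIntegrable ((Real.continuous_cosh.comp
        (continuous_const.mul continuous_id)).mul (Real.continuous_cos.comp
        (continuous_const.mul continuous_id))) _ _)]
    simp [Real.sin_nat_mul_pi, hcosnpi n]
  have I1 : ∀ n : ℕ, (∫ ξ in (0:ℝ)..Real.pi, Real.cosh (a * (Real.pi - ξ)) * Real.cos (n * ξ))
      = a * Real.sinh (a * Real.pi) / (l + (n:ℝ) ^ 2) := by
    intro n
    have hG : ∀ ξ : ℝ, HasDerivAt (fun ξ => (-(a * Real.sinh (a * (Real.pi - ξ))) * Real.cos (n * ξ)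
        + n * Real.cosh (a * (Real.pi - ξ)) * Real.sin (n * ξ)) / (l + (n:ℝ) ^ 2))
        (Real.cosh (a * (Real.pi - ξ)) * Real.cos (n * ξ)) ξ := by
      intro ξ
      have hax : HasDerivAt (fun ξ : ℝ => a * (Real.pi - ξ)) (-a) ξ := by
        simpa using ((hasDerivAt_id ξ).const_sub Real.pi).const_mul a
      have hnx : HasDerivAt (fun ξ : ℝ => (n:ℝ) * ξ) (n:ℝ) ξ := by
        simpa using (hasDerivAt_id ξ).const_mul (n:ℝ)
      have h := ((((hax.sinh.const_mul a).neg).mul hnx.cos).add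
        ((hax.cosh.const_mul (n:ℝ)).mul hnx.sin)).div_const (l + (n:ℝ) ^ 2)
      refine h.congr_deriv ?_
      simp only [Pi.neg_apply]
      rw [← ha2]
      field_simp
      ring
    rw [intervalIntegral.integral_eq_sub_of_hasDerivAt (fun ξ _ => hG ξ)
      (Continuous.intervalIntegrable ((Real.continuous_cosh.comp
        (continuous_const.mul (continuous_const.sub continuous_id))).mul
        (Real.continuous_cos.comp (continuous_const.mul continuous_id))) _ _)]
    simp [Real.sin_nat_mul_pi, hcosnpi n]
    ring
  -- the common summable majorant
  have hg : Summable (fun n : ℕ => (l + (n:ℝ) ^ 2) ^ (2 * α - 2)) := by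
    rw [← summable_nat_add_iff 1]
    have hmaj : Summable (fun n : ℕ => ((n + 1 : ℕ) : ℝ) ^ (4 * α - 4)) := by
      have : Summable (fun n : ℕ => ((n : ℕ) : ℝ) ^ (4 * α - 4)) :=
        Real.summable_nat_rpow.mpr (by linarith)
      exact (summable_nat_add_iff 1).mpr this
    apply Summable.of_nonneg_of_le (fun n => Real.rpow_nonneg (hx _).le _) _ hmaj
    intro n
    have h1 : (0:ℝ) < ((n + 1 : ℕ) : ℝ) := by positivity
    have h2 : (l + ((n + 1 : ℕ) : ℝ) ^ 2) ^ (2 * α - 2)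
        ≤ (((n + 1 : ℕ) : ℝ) ^ 2) ^ (2 * α - 2) :=
      Real.rpow_le_rpow_of_nonpos (by positivity) (by linarith) (by linarith)
    calc (l + ((n + 1 : ℕ) : ℝ) ^ 2) ^ (2 * α - 2)
        ≤ (((n + 1 : ℕ) : ℝ) ^ 2) ^ (2 * α - 2) := h2
      _ = ((n + 1 : ℕ) : ℝ) ^ (4 * α - 4) := by
          rw [← Real.rpow_natCast ((n + 1 : ℕ) : ℝ) 2, ← Real.rpow_mul h1.le]
          norm_num
          ring_nf
  -- rewrite each summand
  have key : ∀ (c : ℝ) (n : ℕ), c ^ 2 = 1 →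
      (l + (n:ℝ) ^ 2) ^ (2 * α) * (c / (l + (n:ℝ) ^ 2)) ^ 2
        = (l + (n:ℝ) ^ 2) ^ (2 * α - 2) := by
    intro c n hc
    rw [div_pow, hc]
    rw [show (2 * α - 2) = 2 * α + (-2 : ℝ) by ring, Real.rpow_add (hx n),
      Real.rpow_neg (hx n).le, Real.rpow_two]
    field_simp
  constructor
  · apply hg.congr
    intro n
    have hval : (∫ ξ in Set.Ioo (0:ℝ) Real.pi,
        (-Real.cosh (a * (Real.pi - ξ)) / (a * Real.sinh (a * Real.pi))) * Real.cos (n * ξ))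
        = (-1) / (l + (n:ℝ) ^ 2) := by
      rw [← MeasureTheory.integral_Ioc_eq_integral_Ioo,
        ← intervalIntegral.integral_of_le Real.pi_pos.le]
      have : ∀ ξ : ℝ, (-Real.cosh (a * (Real.pi - ξ)) / (a * Real.sinh (a * Real.pi)))
          * Real.cos (n * ξ)
          = (-(1 / (a * Real.sinh (a * Real.pi)))) *
            (Real.cosh (a * (Real.pi - ξ)) * Real.cos (n * ξ)) := fun ξ => by ring
      simp only [this]
      rw [intervalIntegral.integral_const_mul, I1 n]
      field_simp
    rw [hval, ← key (-1) n (by norm_num)]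
  · apply hg.congr
    intro n
    have hval : (∫ ξ in Set.Ioo (0:ℝ) Real.pi,
        (Real.cosh (a * ξ) / (a * Real.sinh (a * Real.pi))) * Real.cos (n * ξ))
        = (-1:ℝ) ^ n / (l + (n:ℝ) ^ 2) := by
      rw [← MeasureTheory.integral_Ioc_eq_integral_Ioo,
        ← intervalIntegral.integral_of_le Real.pi_pos.le]
      have : ∀ ξ : ℝ, (Real.cosh (a * ξ) / (a * Real.sinh (a * Real.pi))) * Real.cos (n * ξ)
          = (1 / (a * Real.sinh (a * Real.pi))) *
            (Real.cosh (a * ξ) * Real.cos (n * ξ)) := fun ξ => by ring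
      simp only [this]
      rw [intervalIntegral.integral_const_mul, I2 n]
      field_simp
    rw [hval, ← key ((-1:ℝ) ^ n) n (by rw [← pow_mul, mul_comm, pow_mul]; norm_num)]
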